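/- Let k ∈ ℝ, k ≠ 0, and set θ(x, y, t) = k(2x + 2y + k²t)/2. Define q(x, y, t) = u₁(x, y, t) = u₂(x, y, t) = 2k²·e^{θ}/(1 + e^{θ})². Then the one-soliton identity 4q_t = −q_{xxx} + 3q_{xyy} + 3(q u₁)_x + 3(q u₂)_y holds identically on ℝ³. -/

import Mathlib

noncomputable def G0 (k u : ℝ) : ℝ := 2 * k ^ 2 * Real.exp u / (1 + Real.exp u) ^ 2
noncomputable def G1 (k u : ℝ) : ℝ :=
  2 * k ^ 2 * (Real.exp u - Real.exp u ^ 2) / (1 + Real.exp u) ^ 3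
noncomputable def G2 (k u : ℝ) : ℝ :=
  2 * k ^ 2 * (Real.exp u - 4 * Real.exp u ^ 2 + Real.exp u ^ 3) / (1 + Real.exp u) ^ 4
noncomputable def G3 (k u : ℝ) : ℝ :=
  2 * k ^ 2 * (Real.exp u - 11 * Real.exp u ^ 2 + 11 * Real.exp u ^ 3 - Real.exp u ^ 4) /
    (1 + Real.exp u) ^ 5

lemma hDne (u : ℝ) (n : ℕ) : ((1 + Real.exp u) ^ n) ≠ 0 := by positivity

lemma hden (u : ℝ) (n : ℕ) :
    HasDerivAt (fun u => (1 + Real.exp u) ^ n)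
      ((n : ℝ) * (1 + Real.exp u) ^ (n - 1) * Real.exp u) u := by
  exact ((Real.hasDerivAt_exp u).const_add 1).pow n

lemma hG0d (k u : ℝ) : HasDerivAt (G0 k) (G1 k u) u := by
  have h := ((Real.hasDerivAt_exp u).const_mul (2 * k ^ 2)).div (hden u 2) (hDne u 2)
  unfold G0 G1
  refine h.congr_deriv ?_
  have := Real.exp_pos u
  field_simp
  ring

lemma hG1d (k u : ℝ) : HasDerivAt (G1 k) (G2 k u) u := by
  have hnum : HasDerivAt (fun u => 2 * k ^ 2 * (Real.exp u - Real.exp u ^ 2))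
      (2 * k ^ 2 * (Real.exp u - 2 * Real.exp u ^ 1 * Real.exp u)) u :=
    ((Real.hasDerivAt_exp u).sub ((Real.hasDerivAt_exp u).pow 2)).const_mul _
  have h := hnum.div (hden u 3) (hDne u 3)
  unfold G1 G2
  refine h.congr_deriv ?_
  have := Real.exp_pos u
  field_simp
  ring

lemma hG2d (k u : ℝ) : HasDerivAt (G2 k) (G3 k u) u := by
  have hnum : HasDerivAt
      (fun u => 2 * k ^ 2 * (Real.exp u - 4 * Real.exp u ^ 2 + Real.exp u ^ 3))
      (2 * k ^ 2 * (Real.exp u - 4 * (2 * Real.exp u ^ 1 * Real.exp u)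
        + 3 * Real.exp u ^ 2 * Real.exp u)) u :=
    (((Real.hasDerivAt_exp u).sub (((Real.hasDerivAt_exp u).pow 2).const_mul 4)).add
      ((Real.hasDerivAt_exp u).pow 3)).const_mul _
  have h := hnum.div (hden u 4) (hDne u 4)
  unfold G2 G3
  refine h.congr_deriv ?_
  have := Real.exp_pos u
  field_simp
  ring

lemma dx_comp (G G' : ℝ → ℝ) (hG : ∀ u, HasDerivAt G (G' u) u) (k y t x : ℝ) :
    deriv (fun x' => G (k * (2 * x' + 2 * y + k ^ 2 * t) / 2)) x
      = G' (k * (2 * x + 2 * y + k ^ 2 * t) / 2) * k := by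
  have hl : HasDerivAt (fun x' => k * (2 * x' + 2 * y + k ^ 2 * t) / 2) k x := by
    have h := ((((hasDerivAt_id x).const_mul (2:ℝ)).add_const
      (2 * y + k ^ 2 * t)).const_mul k).div_const 2
    have hfun : (fun x' => k * (2 * x' + 2 * y + k ^ 2 * t) / 2)
        = fun x' => k * (2 * x' + (2 * y + k ^ 2 * t)) / 2 := by funext x'; ring
    rw [hfun]
    exact h.congr_deriv (by ring)
  exact ((hG _).comp x hl).deriv

lemma dy_comp (G G' : ℝ → ℝ) (hG : ∀ u, HasDerivAt G (G' u) u) (k x t y : ℝ) :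
    deriv (fun y' => G (k * (2 * x + 2 * y' + k ^ 2 * t) / 2)) y
      = G' (k * (2 * x + 2 * y + k ^ 2 * t) / 2) * k := by
  have hl : HasDerivAt (fun y' => k * (2 * x + 2 * y' + k ^ 2 * t) / 2) k y := by
    have h := ((((hasDerivAt_id y).const_mul (2:ℝ)).add_const
      (2 * x + k ^ 2 * t)).const_mul k).div_const 2
    have hfun : (fun y' => k * (2 * x + 2 * y' + k ^ 2 * t) / 2)
        = fun y' => k * (2 * y' + (2 * x + k ^ 2 * t)) / 2 := by funext y'; ring
    rw [hfun]
    exact h.congr_deriv (by ring)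
  exact ((hG _).comp y hl).deriv

lemma dt_comp (G G' : ℝ → ℝ) (hG : ∀ u, HasDerivAt G (G' u) u) (k x y t : ℝ) :
    deriv (fun t' => G (k * (2 * x + 2 * y + k ^ 2 * t') / 2)) t
      = G' (k * (2 * x + 2 * y + k ^ 2 * t) / 2) * (k ^ 3 / 2) := by
  have hl : HasDerivAt (fun t' => k * (2 * x + 2 * y + k ^ 2 * t') / 2) (k ^ 3 / 2) t := by
    have h := ((((hasDerivAt_id t).const_mul (k ^ 2)).add_const
      (2 * x + 2 * y)).const_mul k).div_const 2
    have hfun : (fun t' => k * (2 * x + 2 * y + k ^ 2 * t') / 2)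
        = fun t' => k * (k ^ 2 * t' + (2 * x + 2 * y)) / 2 := by funext t'; ring
    rw [hfun]
    exact h.congr_deriv (by ring)
  exact ((hG _).comp t hl).deriv

/-- Partial derivative in `x` for a real function `f(x, y, t)`. -/
noncomputable def rdx (f : ℝ → ℝ → ℝ → ℝ) : ℝ → ℝ → ℝ → ℝ :=
  fun x y t => deriv (fun x' => f x' y t) x

/-- Partial derivative in `y`. -/
noncomputable def rdy (f : ℝ → ℝ → ℝ → ℝ) : ℝ → ℝ → ℝ → ℝ :=
  fun x y t => deriv (fun y' => f x y' t) y

/-- Partial derivative in `t`. -/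
noncomputable def rdt (f : ℝ → ℝ → ℝ → ℝ) : ℝ → ℝ → ℝ → ℝ :=
  fun x y t => deriv (fun t' => f x y t') t

set_option maxHeartbeats 1000000 in
/-- Hirota's one-soliton `q = u₁ = u₂ = 2k²e^θ/(1+e^θ)²` with
`θ = k(2x + 2y + k²t)/2` solves the zero-energy Novikov–Veselov equation. -/
theorem statement11 (k : ℝ) (hk : k ≠ 0)
    (θ : ℝ → ℝ → ℝ → ℝ) (hθ : θ = fun x y t => k * (2 * x + 2 * y + k ^ 2 * t) / 2)
    (q u₁ u₂ : ℝ → ℝ → ℝ → ℝ)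
    (hq : q = fun x y t => 2 * k ^ 2 * Real.exp (θ x y t) / (1 + Real.exp (θ x y t)) ^ 2)
    (hu₁ : u₁ = q) (hu₂ : u₂ = q) :
    ∀ x y t, 4 * rdt q x y t
        = - rdx (rdx (rdx q)) x y t + 3 * rdx (rdy (rdy q)) x y t
          + 3 * rdx (fun x y t => q x y t * u₁ x y t) x y t
          + 3 * rdy (fun x y t => q x y t * u₂ x y t) x y t := by
  subst hu₁ hu₂ hq hθ
  intro x y t
  have E1 : rdx (fun x y t => 2 * k ^ 2 * Real.exp (k * (2 * x + 2 * y + k ^ 2 * t) / 2) /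
        (1 + Real.exp (k * (2 * x + 2 * y + k ^ 2 * t) / 2)) ^ 2)
      = fun x y t => G1 k (k * (2 * x + 2 * y + k ^ 2 * t) / 2) * k := by
    funext a b c; simp only [rdx]
    exact dx_comp (G0 k) (G1 k) (hG0d k) k b c a
  have E1y : rdy (fun x y t => 2 * k ^ 2 * Real.exp (k * (2 * x + 2 * y + k ^ 2 * t) / 2) /
        (1 + Real.exp (k * (2 * x + 2 * y + k ^ 2 * t) / 2)) ^ 2)
      = fun x y t => G1 k (k * (2 * x + 2 * y + k ^ 2 * t) / 2) * k := by
    funext a b c; simp only [rdy]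
    exact dy_comp (G0 k) (G1 k) (hG0d k) k a c b
  have E2 : rdx (fun x y t => G1 k (k * (2 * x + 2 * y + k ^ 2 * t) / 2) * k)
      = fun x y t => G2 k (k * (2 * x + 2 * y + k ^ 2 * t) / 2) * k * k := by
    funext a b c; simp only [rdx]
    exact dx_comp (fun u => G1 k u * k) (fun u => G2 k u * k)
      (fun u => (hG1d k u).mul_const k) k b c a
  have E2y : rdy (fun x y t => G1 k (k * (2 * x + 2 * y + k ^ 2 * t) / 2) * k)
      = fun x y t => G2 k (k * (2 * x + 2 * y + k ^ 2 * t) / 2) * k * k := by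
    funext a b c; simp only [rdy]
    exact dy_comp (fun u => G1 k u * k) (fun u => G2 k u * k)
      (fun u => (hG1d k u).mul_const k) k a c b
  have E3 : rdx (fun x y t => G2 k (k * (2 * x + 2 * y + k ^ 2 * t) / 2) * k * k)
      = fun x y t => G3 k (k * (2 * x + 2 * y + k ^ 2 * t) / 2) * k * k * k := by
    funext a b c; simp only [rdx]
    exact dx_comp (fun u => G2 k u * k * k) (fun u => G3 k u * k * k)
      (fun u => ((hG2d k u).mul_const k).mul_const k) k b c a
  have Et : rdt (fun x y t => 2 * k ^ 2 * Real.exp (k * (2 * x + 2 * y + k ^ 2 * t) / 2) /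
        (1 + Real.exp (k * (2 * x + 2 * y + k ^ 2 * t) / 2)) ^ 2)
      = fun x y t => G1 k (k * (2 * x + 2 * y + k ^ 2 * t) / 2) * (k ^ 3 / 2) := by
    funext a b c; simp only [rdt]
    exact dt_comp (G0 k) (G1 k) (hG0d k) k a b c
  have Ep : rdx (fun x y t =>
        2 * k ^ 2 * Real.exp (k * (2 * x + 2 * y + k ^ 2 * t) / 2) /
          (1 + Real.exp (k * (2 * x + 2 * y + k ^ 2 * t) / 2)) ^ 2 *
        (2 * k ^ 2 * Real.exp (k * (2 * x + 2 * y + k ^ 2 * t) / 2) /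
          (1 + Real.exp (k * (2 * x + 2 * y + k ^ 2 * t) / 2)) ^ 2))
      = fun x y t => (G1 k (k * (2 * x + 2 * y + k ^ 2 * t) / 2) *
          G0 k (k * (2 * x + 2 * y + k ^ 2 * t) / 2) +
          G0 k (k * (2 * x + 2 * y + k ^ 2 * t) / 2) *
          G1 k (k * (2 * x + 2 * y + k ^ 2 * t) / 2)) * k := by
    funext a b c; simp only [rdx]
    exact dx_comp (fun u => G0 k u * G0 k u)
      (fun u => G1 k u * G0 k u + G0 k u * G1 k u)
      (fun u => (hG0d k u).mul (hG0d k u)) k b c a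
  have Epy : rdy (fun x y t =>
        2 * k ^ 2 * Real.exp (k * (2 * x + 2 * y + k ^ 2 * t) / 2) /
          (1 + Real.exp (k * (2 * x + 2 * y + k ^ 2 * t) / 2)) ^ 2 *
        (2 * k ^ 2 * Real.exp (k * (2 * x + 2 * y + k ^ 2 * t) / 2) /
          (1 + Real.exp (k * (2 * x + 2 * y + k ^ 2 * t) / 2)) ^ 2))
      = fun x y t => (G1 k (k * (2 * x + 2 * y + k ^ 2 * t) / 2) *
          G0 k (k * (2 * x + 2 * y + k ^ 2 * t) / 2) +
          G0 k (k * (2 * x + 2 * y + k ^ 2 * t) / 2) *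
          G1 k (k * (2 * x + 2 * y + k ^ 2 * t) / 2)) * k := by
    funext a b c; simp only [rdy]
    exact dy_comp (fun u => G0 k u * G0 k u)
      (fun u => G1 k u * G0 k u + G0 k u * G1 k u)
      (fun u => (hG0d k u).mul (hG0d k u)) k a c b
  beta_reduce
  rw [Et, E1, E1y, E2, E2y, E3, Ep, Epy]
  simp only [G0, G1, G2, G3]
  have hE := Real.exp_pos (k * (2 * x + 2 * y + k ^ 2 * t) / 2)
  have hD : (1 : ℝ) + Real.exp (k * (2 * x + 2 * y + k ^ 2 * t) / 2) ≠ 0 := by positivity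
  field_simp
  ring
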